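/- The Laurent polynomial W(z₁,z₂,z₃) = z₃(1 + z₁ + z₁z₂)(1 + z₂ + z₁z₂) has exactly the critical points in (ℂ*)³ given by z₁ = z₂ = ω with ω a primitive cube root of unity (ω² + ω + 1 = 0) and z₃ ∈ ℂ* arbitrary. -/

import Mathlib

/-- The Laurent polynomial `W(z₁,z₂,z₃) = z₃(1 + z₁ + z₁z₂)(1 + z₂ + z₁z₂)` has exactly
the critical points in `(ℂ*)³` given by `z₁ = z₂ = ω` with `ω² + ω + 1 = 0` (a primitive
cube root of unity) and `z₃ ∈ ℂ*` arbitrary. -/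
theorem stmt12 (W : ℂ → ℂ → ℂ → ℂ)
    (hW : W = fun a b c => c * (1 + a + a * b) * (1 + b + a * b))
    (z₁ z₂ z₃ : ℂ) (h₁ : z₁ ≠ 0) (h₂ : z₂ ≠ 0) (h₃ : z₃ ≠ 0) :
    (deriv (fun t => W t z₂ z₃) z₁ = 0 ∧ deriv (fun t => W z₁ t z₃) z₂ = 0 ∧
      deriv (fun t => W z₁ z₂ t) z₃ = 0) ↔
    (z₂ = z₁ ∧ z₁ ^ 2 + z₁ + 1 = 0) := by
  subst hW
  have hd1 : HasDerivAt (fun t : ℂ => z₃ * (1 + t + t * z₂) * (1 + z₂ + t * z₂))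
      (z₃ * ((1 + z₂) * (1 + z₂ + z₁ * z₂) + (1 + z₁ + z₁ * z₂) * z₂)) z₁ := by
    have hf : HasDerivAt (fun t : ℂ => 1 + t + t * z₂) (1 + z₂) z₁ := by
      simpa using (((hasDerivAt_id z₁).const_add 1).fun_add ((hasDerivAt_id z₁).mul_const z₂))
    have hg : HasDerivAt (fun t : ℂ => 1 + z₂ + t * z₂) z₂ z₁ := by
      simpa using ((hasDerivAt_id z₁).mul_const z₂).const_add (1 + z₂)
    have := (hf.const_mul z₃).fun_mul hg
    convert! this using 1
    ring
  have hd2 : HasDerivAt (fun t : ℂ => z₃ * (1 + z₁ + z₁ * t) * (1 + t + z₁ * t))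
      (z₃ * (z₁ * (1 + z₂ + z₁ * z₂) + (1 + z₁ + z₁ * z₂) * (1 + z₁))) z₂ := by
    have hf : HasDerivAt (fun t : ℂ => 1 + z₁ + z₁ * t) z₁ z₂ := by
      simpa using ((hasDerivAt_id z₂).const_mul z₁).const_add (1 + z₁)
    have hg : HasDerivAt (fun t : ℂ => 1 + t + z₁ * t) (1 + z₁) z₂ := by
      simpa using (((hasDerivAt_id z₂).const_add 1).fun_add ((hasDerivAt_id z₂).const_mul z₁))
    have := (hf.const_mul z₃).fun_mul hg
    convert! this using 1
    ring
  have hd3 : HasDerivAt (fun t : ℂ => t * (1 + z₁ + z₁ * z₂) * (1 + z₂ + z₁ * z₂))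
      ((1 + z₁ + z₁ * z₂) * (1 + z₂ + z₁ * z₂)) z₃ := by
    simpa using ((hasDerivAt_id z₃).mul_const (1 + z₁ + z₁ * z₂)).mul_const (1 + z₂ + z₁ * z₂)
  rw [show (deriv (fun t => (fun a b c => c * (1 + a + a * b) * (1 + b + a * b)) t z₂ z₃) z₁)
      = z₃ * ((1 + z₂) * (1 + z₂ + z₁ * z₂) + (1 + z₁ + z₁ * z₂) * z₂) from hd1.deriv,
    show (deriv (fun t => (fun a b c => c * (1 + a + a * b) * (1 + b + a * b)) z₁ t z₃) z₂)
      = z₃ * (z₁ * (1 + z₂ + z₁ * z₂) + (1 + z₁ + z₁ * z₂) * (1 + z₁)) from hd2.deriv,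
    show (deriv (fun t => (fun a b c => c * (1 + a + a * b) * (1 + b + a * b)) z₁ z₂ t) z₃)
      = (1 + z₁ + z₁ * z₂) * (1 + z₂ + z₁ * z₂) from hd3.deriv]
  constructor
  · rintro ⟨e1, e2, e3⟩
    have e1' : (1 + z₂) * (1 + z₂ + z₁ * z₂) + (1 + z₁ + z₁ * z₂) * z₂ = 0 :=
      (mul_eq_zero.mp e1).resolve_left h₃
    have e2' : z₁ * (1 + z₂ + z₁ * z₂) + (1 + z₁ + z₁ * z₂) * (1 + z₁) = 0 :=
      (mul_eq_zero.mp e2).resolve_left h₃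
    rcases mul_eq_zero.mp e3 with hf | hg
    · -- f = 0, so (1+z₂) * g = 0
      rcases mul_eq_zero.mp (show (1 + z₂) * (1 + z₂ + z₁ * z₂) = 0 by
          linear_combination e1' - z₂ * hf) with h | hg
      · exfalso
        have hz2 : z₂ = -1 := by linear_combination h
        have : (1 : ℂ) = 0 := by linear_combination hf - z₁ * hz2
        exact one_ne_zero this
      · have hz : z₂ = z₁ := by linear_combination hg - hf
        exact ⟨hz, by linear_combination hf - z₁ * hz⟩
    · -- g = 0, so f * (1+z₁) = 0
      rcases mul_eq_zero.mp (show (1 + z₁ + z₁ * z₂) * (1 + z₁) = 0 by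
          linear_combination e2' - z₁ * hg) with hf | h
      · have hz : z₂ = z₁ := by linear_combination hg - hf
        exact ⟨hz, by linear_combination hf - z₁ * hz⟩
      · exfalso
        have hz1 : z₁ = -1 := by linear_combination h
        have : (1 : ℂ) = 0 := by linear_combination hg - z₂ * hz1
        exact one_ne_zero this
  · rintro ⟨hz, hq⟩
    subst hz
    refine ⟨?_, ?_, ?_⟩
    · linear_combination z₃ * (1 + 2 * z₂) * hq
    · linear_combination z₃ * (1 + 2 * z₂) * hq
    · linear_combination (1 + z₂ + z₂ * z₂) * hq
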